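/- Let u¹, u² : ℝ² → M_n(ℝ) be continuously differentiable and satisfy the zero-curvature condition ∂₂u¹ − ∂₁u² + [u¹, u²] = 0 everywhere, let Ψ : ℝ² → M_n(ℝ) be twice continuously differentiable with Ψ(ξ) invertible for every ξ and solving the linear spectral problem for (u¹, u²), and let r : ℝ → ℝ be continuously differentiable. Then the surface F^r := r(ξ₁)·Ψ⁻¹·(∂₁Ψ) has partial derivatives ∂₁F^r = Ψ⁻¹·∂₁(r(ξ₁)u¹)·Ψ and ∂₂F^r = r(ξ₁)·Ψ⁻¹·(∂₁u²)·Ψ at every point of ℝ². In particular, for r ≡ 1, F¹ := Ψ⁻¹∂₁Ψ satisfies ∂₁F¹ = Ψ⁻¹(∂₁u¹)Ψ and ∂₂F¹ = Ψ⁻¹(∂₁u²)Ψ. -/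

import Mathlib

open Matrix

attribute [local instance] Matrix.normedAddCommGroup Matrix.normedSpace

/-- Partial derivative in the first variable `ξ₁` of a matrix-valued map on `ℝ²`. -/
noncomputable def pd1 {n : ℕ} (f : ℝ × ℝ → Matrix (Fin n) (Fin n) ℝ) (p : ℝ × ℝ) :
    Matrix (Fin n) (Fin n) ℝ :=
  fderiv ℝ f p (1, 0)

/-- Partial derivative in the second variable `ξ₂` of a matrix-valued map on `ℝ²`. -/
noncomputable def pd2 {n : ℕ} (f : ℝ × ℝ → Matrix (Fin n) (Fin n) ℝ) (p : ℝ × ℝ) :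
    Matrix (Fin n) (Fin n) ℝ :=
  fderiv ℝ f p (0, 1)

/-- Matrix multiplication as a continuous bilinear map (continuity from finite dimension). -/
noncomputable def mulCLM (n : ℕ) : Matrix (Fin n) (Fin n) ℝ →L[ℝ]
    Matrix (Fin n) (Fin n) ℝ →L[ℝ] Matrix (Fin n) (Fin n) ℝ :=
  LinearMap.toContinuousLinearMap
  { toFun := fun A => LinearMap.toContinuousLinearMap (LinearMap.mulLeft ℝ A)
    map_add' := by intro A B; ext C i j; simp [add_mul]
    map_smul' := by intro c A; ext C i j; simp [smul_mul_assoc] }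

theorem hasFDerivAt_matmul {n : ℕ} {f g : ℝ × ℝ → Matrix (Fin n) (Fin n) ℝ} {p : ℝ × ℝ}
    {f' g' : ℝ × ℝ →L[ℝ] Matrix (Fin n) (Fin n) ℝ}
    (hf : HasFDerivAt f f' p) (hg : HasFDerivAt g g' p) :
    HasFDerivAt (fun q => f q * g q)
      (((mulCLM n).isBoundedBilinearMap.deriv (f p, g p)).comp (f'.prod g')) p :=
  HasFDerivAt.comp (g := fun x : Matrix (Fin n) (Fin n) ℝ × Matrix (Fin n) (Fin n) ℝ => mulCLM n x.1 x.2)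
    (f := fun q => (f q, g q)) p ((mulCLM n).isBoundedBilinearMap.hasFDerivAt (f p, g p)) (hf.prodMk hg)

theorem differentiableAt_matmul {n : ℕ} {f g : ℝ × ℝ → Matrix (Fin n) (Fin n) ℝ} {p : ℝ × ℝ}
    (hf : DifferentiableAt ℝ f p) (hg : DifferentiableAt ℝ g p) :
    DifferentiableAt ℝ (fun q => f q * g q) p :=
  (hasFDerivAt_matmul hf.hasFDerivAt hg.hasFDerivAt).differentiableAt

theorem fderiv_matmul {n : ℕ} {f g : ℝ × ℝ → Matrix (Fin n) (Fin n) ℝ} {p : ℝ × ℝ}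
    (hf : DifferentiableAt ℝ f p) (hg : DifferentiableAt ℝ g p) (v : ℝ × ℝ) :
    fderiv ℝ (fun q => f q * g q) p v = fderiv ℝ f p v * g p + f p * fderiv ℝ g p v := by
  erw [(hasFDerivAt_matmul hf.hasFDerivAt hg.hasFDerivAt).fderiv]
  show f p * fderiv ℝ g p v + fderiv ℝ f p v * g p = _
  exact add_comm _ _

theorem contDiff_entries {n : ℕ} {k : ℕ} {f : ℝ × ℝ → Matrix (Fin n) (Fin n) ℝ}
    (h : ContDiff ℝ k f) (i j : Fin n) : ContDiff ℝ k fun q => f q i j :=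
  (contDiff_pi.1 ((contDiff_pi.1 h) i)) j

theorem contDiff_det_of_entries {n k : ℕ} {f : ℝ × ℝ → Matrix (Fin n) (Fin n) ℝ}
    (h : ∀ i j, ContDiff ℝ k fun q => f q i j) :
    ContDiff ℝ k fun q => (f q).det := by
  simp_rw [Matrix.det_apply]
  apply ContDiff.sum
  intro σ _
  simp_rw [Units.smul_def, zsmul_eq_mul]
  exact contDiff_const.mul (contDiff_prod fun i _ => h (σ i) i)

theorem contDiff_inv_matrix {n k : ℕ} {f : ℝ × ℝ → Matrix (Fin n) (Fin n) ℝ}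
    (hf : ContDiff ℝ k f) (hdet : ∀ q, (f q).det ≠ 0) :
    ContDiff ℝ k fun q => (f q)⁻¹ := by
  have hadj : ∀ i j, ContDiff ℝ k fun q => (f q).adjugate i j := by
    intro i j
    simp_rw [Matrix.adjugate_apply]
    apply contDiff_det_of_entries
    intro a b
    rcases eq_or_ne a j with rfl | hne
    · simp only [Matrix.updateRow_self]; exact contDiff_const
    · simp only [Matrix.updateRow_ne hne]; exact contDiff_entries hf a b
  have : (fun q => (f q)⁻¹) = fun q => ((f q).det)⁻¹ • (f q).adjugate := by
    funext q; rw [Matrix.inv_def, Ring.inverse_eq_inv']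
  rw [this]
  refine ContDiff.smul (f := fun q => ((f q).det)⁻¹) (g := fun q => (f q).adjugate) ?_ ?_
  · exact (contDiff_det_of_entries fun i j => contDiff_entries hf i j).inv hdet
  · erw [contDiff_pi]; intro i; erw [contDiff_pi]; exact hadj i

/-- for `(u¹, u²)` satisfying the ZCC, `Ψ` solving the LSP, and `r : ℝ → ℝ`
continuously differentiable, the surface `F^r := r(ξ₁)·Ψ⁻¹·(∂₁Ψ)` has partial derivatives
`∂₁F^r = Ψ⁻¹·∂₁(r(ξ₁)u¹)·Ψ` and `∂₂F^r = r(ξ₁)·Ψ⁻¹·(∂₁u²)·Ψ`.  In particular for `r ≡ 1`,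
`F¹ := Ψ⁻¹·∂₁Ψ` satisfies `∂₁F¹ = Ψ⁻¹(∂₁u¹)Ψ` and `∂₂F¹ = Ψ⁻¹(∂₁u²)Ψ`. -/
theorem surface_Fr_tangent_vectors {n : ℕ} (hn : 1 ≤ n)
    (u1 u2 Ψ : ℝ × ℝ → Matrix (Fin n) (Fin n) ℝ)
    (hu1 : ContDiff ℝ 1 u1) (hu2 : ContDiff ℝ 1 u2)
    (hzcc : ∀ p : ℝ × ℝ, pd2 u1 p - pd1 u2 p + (u1 p * u2 p - u2 p * u1 p) = 0)
    (hΨ : ContDiff ℝ 2 Ψ)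
    (hΨinv : ∀ p : ℝ × ℝ, IsUnit (Ψ p))
    (hlsp1 : ∀ p : ℝ × ℝ, pd1 Ψ p = u1 p * Ψ p)
    (hlsp2 : ∀ p : ℝ × ℝ, pd2 Ψ p = u2 p * Ψ p)
    (r : ℝ → ℝ) (hr : ContDiff ℝ 1 r)
    (Fr : ℝ × ℝ → Matrix (Fin n) (Fin n) ℝ)
    (hFr : Fr = fun p => r p.1 • ((Ψ p)⁻¹ * pd1 Ψ p)) :
    ((∀ p : ℝ × ℝ,
        pd1 Fr p = (Ψ p)⁻¹ * pd1 (fun q => r q.1 • u1 q) p * Ψ p) ∧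
     (∀ p : ℝ × ℝ,
        pd2 Fr p = r p.1 • ((Ψ p)⁻¹ * pd1 u2 p * Ψ p))) ∧
    ((∀ p : ℝ × ℝ,
        pd1 (fun q => (Ψ q)⁻¹ * pd1 Ψ q) p = (Ψ p)⁻¹ * pd1 u1 p * Ψ p) ∧
     (∀ p : ℝ × ℝ,
        pd2 (fun q => (Ψ q)⁻¹ * pd1 Ψ q) p = (Ψ p)⁻¹ * pd1 u2 p * Ψ p)) := by
  set I : ℝ × ℝ → Matrix (Fin n) (Fin n) ℝ := fun q => (Ψ q)⁻¹ with hIdef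
  have hudet : ∀ q, IsUnit (Ψ q).det := fun q =>
    (Matrix.isUnit_iff_isUnit_det (Ψ q)).mp (hΨinv q)
  have hdet : ∀ q, (Ψ q).det ≠ 0 := fun q => (hudet q).ne_zero
  have hIΨ : ∀ q, I q * Ψ q = 1 := fun q => Matrix.nonsing_inv_mul (Ψ q) (hudet q)
  have hΨI : ∀ q, Ψ q * I q = 1 := fun q => Matrix.mul_nonsing_inv (Ψ q) (hudet q)
  have hΨ1 : ContDiff ℝ 1 Ψ := hΨ.of_le (by norm_num)
  have hIc : ContDiff ℝ 1 I := contDiff_inv_matrix hΨ1 hdet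
  have dΨ : Differentiable ℝ Ψ := hΨ1.differentiable one_ne_zero
  have dI : Differentiable ℝ I := hIc.differentiable one_ne_zero
  have du1 : Differentiable ℝ u1 := hu1.differentiable one_ne_zero
  have du2 : Differentiable ℝ u2 := hu2.differentiable one_ne_zero
  -- derivative of the inverse
  have hIder : ∀ p v, fderiv ℝ I p v = -(I p * fderiv ℝ Ψ p v * I p) := by
    intro p v
    have h0 : fderiv ℝ (fun q => I q * Ψ q) p v = 0 := by
      have : (fun q => I q * Ψ q) = fun _ => (1 : Matrix (Fin n) (Fin n) ℝ) := funext hIΨ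
      rw [this, fderiv_fun_const]; simp
    rw [fderiv_matmul (dI p) (dΨ p)] at h0
    have h1 : fderiv ℝ I p v * Ψ p = -(I p * fderiv ℝ Ψ p v) :=
      eq_neg_of_add_eq_zero_left h0
    calc fderiv ℝ I p v = fderiv ℝ I p v * (Ψ p * I p) := by rw [hΨI p, mul_one]
      _ = (fderiv ℝ I p v * Ψ p) * I p := by rw [mul_assoc]
      _ = -(I p * fderiv ℝ Ψ p v * I p) := by rw [h1, neg_mul, mul_assoc]
  have hI1 : ∀ p, fderiv ℝ I p (1, 0) = -(I p * u1 p) := by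
    intro p
    rw [hIder p (1, 0), show fderiv ℝ Ψ p (1, 0) = u1 p * Ψ p from hlsp1 p]
    rw [show I p * (u1 p * Ψ p) * I p = (I p * u1 p) * (Ψ p * I p) by noncomm_ring,
      hΨI p, mul_one]
  have hI2 : ∀ p, fderiv ℝ I p (0, 1) = -(I p * u2 p) := by
    intro p
    rw [hIder p (0, 1), show fderiv ℝ Ψ p (0, 1) = u2 p * Ψ p from hlsp2 p]
    rw [show I p * (u2 p * Ψ p) * I p = (I p * u2 p) * (Ψ p * I p) by noncomm_ring,
      hΨI p, mul_one]
  -- the surface F¹ = Ψ⁻¹ ∂₁Ψ = Ψ⁻¹ u1 Ψ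
  set G : ℝ × ℝ → Matrix (Fin n) (Fin n) ℝ := fun q => I q * (u1 q * Ψ q) with hGdef
  have hGfun : (fun q => (Ψ q)⁻¹ * pd1 Ψ q) = G := by
    funext q; rw [hlsp1 q]
  have duΨ : ∀ p, DifferentiableAt ℝ (fun q => u1 q * Ψ q) p := fun p =>
    differentiableAt_matmul (du1 p) (dΨ p)
  have dG : ∀ p, DifferentiableAt ℝ G p := fun p =>
    differentiableAt_matmul (dI p) (duΨ p)
  have hGder : ∀ p v, fderiv ℝ G p v =
      fderiv ℝ I p v * (u1 p * Ψ p) +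
        I p * (fderiv ℝ u1 p v * Ψ p + u1 p * fderiv ℝ Ψ p v) := by
    intro p v
    rw [fderiv_matmul (dI p) (duΨ p), fderiv_matmul (du1 p) (dΨ p)]
  have hG1 : ∀ p, fderiv ℝ G p (1, 0) = I p * pd1 u1 p * Ψ p := by
    intro p
    rw [hGder p (1, 0), hI1 p, show fderiv ℝ Ψ p (1, 0) = u1 p * Ψ p from hlsp1 p]
    show -(I p * u1 p) * (u1 p * Ψ p) +
        I p * (pd1 u1 p * Ψ p + u1 p * (u1 p * Ψ p)) = I p * pd1 u1 p * Ψ p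
    noncomm_ring
  have hG2 : ∀ p, fderiv ℝ G p (0, 1) = I p * pd1 u2 p * Ψ p := by
    intro p
    have hz : pd2 u1 p = pd1 u2 p - (u1 p * u2 p - u2 p * u1 p) := by
      have := hzcc p
      linear_combination (norm := noncomm_ring) this
    rw [hGder p (0, 1), hI2 p, show fderiv ℝ Ψ p (0, 1) = u2 p * Ψ p from hlsp2 p]
    show -(I p * u2 p) * (u1 p * Ψ p) +
        I p * (pd2 u1 p * Ψ p + u1 p * (u2 p * Ψ p)) = I p * pd1 u2 p * Ψ p
    rw [hz]
    noncomm_ring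
  -- scalar factor c q = r q.1
  set c : ℝ × ℝ → ℝ := fun q => r q.1 with hcdef
  have dc : Differentiable ℝ c := (hr.differentiable one_ne_zero).comp differentiable_fst
  have hcF : ∀ p : ℝ × ℝ, HasFDerivAt c
      ((fderiv ℝ r p.1).comp (ContinuousLinearMap.fst ℝ ℝ ℝ)) p := fun p =>
    ((hr.differentiable one_ne_zero p.1).hasFDerivAt).comp p hasFDerivAt_fst
  have hc1 : ∀ p : ℝ × ℝ, fderiv ℝ c p (1, 0) = deriv r p.1 := by
    intro p
    rw [(hcF p).fderiv]
    show (fderiv ℝ r p.1) (1, (0:ℝ)).1 = deriv r p.1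
    rw [fderiv_apply_one_eq_deriv]
  have hc2 : ∀ p : ℝ × ℝ, fderiv ℝ c p (0, 1) = 0 := by
    intro p
    rw [(hcF p).fderiv]
    show (fderiv ℝ r p.1) ((0:ℝ), (1:ℝ)).1 = 0
    exact (fderiv ℝ r p.1).map_zero
  have hFrG : Fr = fun q => c q • G q := by
    rw [hFr]; funext q; rw [hlsp1 q]
  have hFrder : ∀ p v, fderiv ℝ Fr p v = c p • fderiv ℝ G p v + fderiv ℝ c p v • G p := by
    intro p v
    erw [hFrG, fderiv_fun_smul (dc p) (dG p)]
    rfl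
  have hru1 : ∀ p v, fderiv ℝ (fun q => r q.1 • u1 q) p v =
      c p • fderiv ℝ u1 p v + fderiv ℝ c p v • u1 p := by
    intro p v
    erw [show (fun q : ℝ × ℝ => r q.1 • u1 q) = fun q => c q • u1 q from rfl,
      fderiv_fun_smul (dc p) (du1 p)]
    rfl
  refine ⟨⟨?_, ?_⟩, ?_, ?_⟩
  · intro p
    show fderiv ℝ Fr p (1, 0) = (Ψ p)⁻¹ * fderiv ℝ (fun q => r q.1 • u1 q) p (1, 0) * Ψ p
    rw [hFrder p (1, 0), hru1 p (1, 0), hG1 p, hc1 p]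
    show c p • (I p * pd1 u1 p * Ψ p) + deriv r p.1 • (I p * (u1 p * Ψ p)) =
      I p * (c p • pd1 u1 p + deriv r p.1 • u1 p) * Ψ p
    simp only [mul_add, add_mul, Matrix.mul_smul, Matrix.smul_mul, mul_assoc]
  · intro p
    show fderiv ℝ Fr p (0, 1) = r p.1 • ((Ψ p)⁻¹ * pd1 u2 p * Ψ p)
    rw [hFrder p (0, 1), hG2 p, hc2 p]
    simp; rfl
  · intro p
    show fderiv ℝ (fun q => (Ψ q)⁻¹ * pd1 Ψ q) p (1, 0) = (Ψ p)⁻¹ * pd1 u1 p * Ψ p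
    rw [hGfun]; exact hG1 p
  · intro p
    show fderiv ℝ (fun q => (Ψ q)⁻¹ * pd1 Ψ q) p (0, 1) = (Ψ p)⁻¹ * pd1 u2 p * Ψ p
    rw [hGfun]; exact hG2 p
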